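/- Suppose ℓ, ℓ' : 𝒜 → ℝ both satisfy Σ_a e^{ℓ(a)} = 1 and Σ_a e^{ℓ'(a)} = 1, and both satisfy the stationarity system of the unordered-pair preference loss: for every k ∈ 𝒜, Σ_{b ≠ k} [ P_{kb}(ℓ) − P*_{kb} ] = 0 and Σ_{b ≠ k} [ P_{kb}(ℓ') − P*_{kb} ] = 0. Then ℓ = ℓ', i.e., the stationary point of the constrained preference-loss minimization is unique. -/

import Mathlib

open Finset

/-- The logistic (sigmoid) function σ(z) = 1/(1+e^{-z}). -/
noncomputable def sigmoid (z : ℝ) : ℝ := 1 / (1 + Real.exp (-z))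

/-- Bradley–Terry target probability P*_{ab} = σ(β(Q a − Q b)). -/
noncomputable def Pstar {A : Type*} (β : ℝ) (Q : A → ℝ) (a b : A) : ℝ :=
  sigmoid (β * (Q a - Q b))

/-- Model probability P_{ab}(ℓ) = σ(α(ℓ a − ℓ b)). -/
noncomputable def Pmod {A : Type*} (α : ℝ) (ℓ : A → ℝ) (a b : A) : ℝ :=
  sigmoid (α * (ℓ a - ℓ b))

lemma sigmoid_mono : Monotone sigmoid := by
  intro x y hxy
  unfold sigmoid
  have h1 : (0:ℝ) < 1 + Real.exp (-y) := by positivity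
  have h2 : Real.exp (-y) ≤ Real.exp (-x) := Real.exp_le_exp.mpr (by linarith)
  apply one_div_le_one_div_of_le h1 (by linarith)

lemma sigmoid_inj : Function.Injective sigmoid := by
  intro x y h
  unfold sigmoid at h
  have h1 : (0:ℝ) < 1 + Real.exp (-x) := by positivity
  have h2 : (0:ℝ) < 1 + Real.exp (-y) := by positivity
  field_simp at h
  exact neg_inj.mp (Real.exp_injective (add_left_cancel h.symm))


/-- two normalized log-policies both satisfying the stationarity system of
the unordered-pair preference loss coincide: the constrained stationary point is unique. -/
theorem stmt_17 {A : Type*} [Fintype A] [DecidableEq A] (hA : 2 ≤ Fintype.card A)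
    (Q : A → ℝ) (α β : ℝ) (hα : 0 < α) (hβ : 0 < β) (ℓ ℓ' : A → ℝ)
    (hnorm : ∑ a : A, Real.exp (ℓ a) = 1)
    (hnorm' : ∑ a : A, Real.exp (ℓ' a) = 1)
    (hstat : ∀ k : A,
      ∑ b ∈ Finset.univ.filter (fun b => b ≠ k), (Pmod α ℓ k b - Pstar β Q k b) = 0)
    (hstat' : ∀ k : A,
      ∑ b ∈ Finset.univ.filter (fun b => b ≠ k), (Pmod α ℓ' k b - Pstar β Q k b) = 0) :
    ℓ = ℓ' := by
  have hne : Nonempty A := Fintype.card_pos_iff.mp (by omega)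
  obtain ⟨k, -, hk⟩ := Finset.exists_max_image Finset.univ (fun a => ℓ a - ℓ' a)
    Finset.univ_nonempty
  -- the sums of the differences agree
  have hsum : ∑ b ∈ Finset.univ.filter (fun b => b ≠ k),
      (Pmod α ℓ k b - Pmod α ℓ' k b) = 0 := by
    have h1 := hstat k
    have h2 := hstat' k
    have := Finset.sum_sub_distrib (s := Finset.univ.filter (fun b => b ≠ k))
      (f := fun b => Pmod α ℓ k b - Pstar β Q k b)
      (g := fun b => Pmod α ℓ' k b - Pstar β Q k b)
    simp only [sub_sub_sub_cancel_right] at this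
    rw [this, h1, h2, sub_zero]
  have hnonneg : ∀ b ∈ Finset.univ.filter (fun b => b ≠ k),
      0 ≤ Pmod α ℓ k b - Pmod α ℓ' k b := by
    intro b _
    have hb := hk b (Finset.mem_univ b)
    have : α * (ℓ' k - ℓ' b) ≤ α * (ℓ k - ℓ b) := by nlinarith
    have := sigmoid_mono this
    simpa [Pmod] using this
  have hall := (Finset.sum_eq_zero_iff_of_nonneg hnonneg).mp hsum
  -- ℓ - ℓ' is constant
  have hconst : ∀ b : A, ℓ b - ℓ' b = ℓ k - ℓ' k := by
    intro b
    by_cases hb : b = k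
    · rw [hb]
    · have := hall b (by simp [hb])
      have heq : sigmoid (α * (ℓ k - ℓ b)) = sigmoid (α * (ℓ' k - ℓ' b)) := by
        have : Pmod α ℓ k b = Pmod α ℓ' k b := by linarith
        simpa [Pmod] using this
      have := sigmoid_inj heq
      have : ℓ k - ℓ b = ℓ' k - ℓ' b := by
        have hαne : α ≠ 0 := ne_of_gt hα
        field_simp at this
        linarith
      linarith
  set c := ℓ k - ℓ' k with hc
  have hsum' : ∑ a : A, Real.exp (ℓ a) = Real.exp c * ∑ a : A, Real.exp (ℓ' a) := by
    rw [Finset.mul_sum]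
    apply Finset.sum_congr rfl
    intro a _
    rw [← Real.exp_add]
    congr 1
    have := hconst a
    linarith
  rw [hnorm, hnorm', mul_one] at hsum'
  have hc0 : c = 0 := by
    have := Real.exp_injective (by rw [← hsum', Real.exp_zero] : Real.exp c = Real.exp 0)
    exact this
  funext a
  have := hconst a
  linarith
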